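/- Let n₁ < n₂ < n₃ be positive integers with n₃ ≠ n₁ + n₂. Set a = ((n₁+n₂−n₃)² − 4n₁n₂)² and q = 8(n₁+n₂−n₃)(n₁−n₂−n₃)(n₁−n₂+n₃). Then q ≠ 0 and each of the four integers a, a + n₁q, a + n₂q, a + n₃q is a perfect square. In particular, for every non-symmetric set I = {0, n₁, n₂, n₃} there exists a nonconstant integer arithmetic progression having squares at all positions of I, so z_I > 0. -/

import Mathlib

/-- `Zset I` is the set of pairs `(q, a) ∈ ℤ²` with `gcd q a` squarefree, `q ≠ 0`, and
`q * i + a` a perfect square for all `i ∈ I`. -/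
def Zset (I : Finset ℕ) : Set (ℤ × ℤ) :=
  {p | Squarefree (Int.gcd p.1 p.2) ∧ p.1 ≠ 0 ∧ ∀ i ∈ I, IsSquare (p.1 * (i : ℤ) + p.2)}

/-- From any nonconstant progression with squares on `I`, we get a member of `Zset I`
by dividing out the square part of the gcd. -/
lemma exists_mem_Zset (I : Finset ℕ) (q a : ℤ) (hq : q ≠ 0)
    (h : ∀ i ∈ I, IsSquare (q * (i : ℤ) + a)) : (Zset I).Nonempty := by
  obtain ⟨r, s, hrs, hr⟩ := Nat.sq_mul_squarefree (Int.gcd q a)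
  have hg : Int.gcd q a ≠ 0 := by
    simp [Int.gcd_eq_zero_iff, hq]
  have hs : s ≠ 0 := by
    rintro rfl; simp at hrs; omega
  have hs2 : ((s : ℤ)) ^ 2 ≠ 0 := by positivity
  have hsq : ((s : ℤ)) ^ 2 ∣ q := by
    have h1 : ((s : ℤ)) ^ 2 ∣ (Int.gcd q a : ℤ) := by
      exact_mod_cast Dvd.intro r (by omega)
    exact h1.trans (Int.gcd_dvd_left _ _)
  have hsa : ((s : ℤ)) ^ 2 ∣ a := by
    have h1 : ((s : ℤ)) ^ 2 ∣ (Int.gcd q a : ℤ) := by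
      exact_mod_cast Dvd.intro r (by omega)
    exact h1.trans (Int.gcd_dvd_right _ _)
  obtain ⟨q', rfl⟩ := hsq
  obtain ⟨a', rfl⟩ := hsa
  have hq' : q' ≠ 0 := by
    intro h'
    exact hq (by rw [h', mul_zero])
  refine ⟨(q', a'), ?_, hq', ?_⟩
  · -- squarefree gcd
    have hgcd : Int.gcd ((s:ℤ)^2 * q') ((s:ℤ)^2 * a') = s ^ 2 * Int.gcd q' a' := by
      rw [Int.gcd_mul_left]
      simp [Int.natAbs_pow]
    have : r = Int.gcd q' a' := by
      have h3 := hrs.trans hgcd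
      have hs2' : s ^ 2 ≠ 0 := pow_ne_zero _ hs
      exact Nat.eq_of_mul_eq_mul_left (Nat.pos_of_ne_zero hs2') h3
    simpa [← this] using hr
  · intro i hi
    obtain ⟨x, hx⟩ := h i hi
    have hdvd : (s : ℤ) ∣ x := by
      have h2 : ((s:ℤ))^2 ∣ x ^ 2 := by
        rw [sq x, ← hx]
        exact ⟨q' * i + a', by ring⟩
      exact (Int.pow_dvd_pow_iff (two_ne_zero)).mp h2
    obtain ⟨y, rfl⟩ := hdvd
    refine ⟨y, ?_⟩
    have h4 : ((s:ℤ))^2 * (q' * i + a') = ((s:ℤ))^2 * (y * y) := by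
      linear_combination hx
    exact mul_left_cancel₀ hs2 h4

/-- For a non-symmetric set `{0, n₁, n₂, n₃}` (i.e. `n₃ ≠ n₁ + n₂`), the explicit
arithmetic progression with `a = ((n₁ + n₂ - n₃)² - 4 n₁ n₂)²` and
`q = 8 (n₁ + n₂ - n₃)(n₁ - n₂ - n₃)(n₁ - n₂ + n₃)` is nonconstant and has squares at
positions `0, n₁, n₂, n₃`; in particular `Zset {0, n₁, n₂, n₃}` is nonempty. -/
theorem nonsymmetric_quadruple_has_progression (n₁ n₂ n₃ : ℕ) (h₀ : 0 < n₁)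
    (h₁₂ : n₁ < n₂) (h₂₃ : n₂ < n₃) (hsym : n₃ ≠ n₁ + n₂) :
    ∀ a q : ℤ, a = (((n₁ : ℤ) + n₂ - n₃) ^ 2 - 4 * n₁ * n₂) ^ 2 →
      q = 8 * ((n₁ : ℤ) + n₂ - n₃) * ((n₁ : ℤ) - n₂ - n₃) * ((n₁ : ℤ) - n₂ + n₃) →
      q ≠ 0 ∧ IsSquare a ∧ IsSquare (a + n₁ * q) ∧ IsSquare (a + n₂ * q) ∧
        IsSquare (a + n₃ * q) ∧ (Zset {0, n₁, n₂, n₃}).Nonempty := by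
  intro a q ha hq
  have e0 : (0:ℕ) < n₁ := h₀
  have c0 : (0:ℤ) < (n₁:ℤ) := by exact_mod_cast h₀
  have c1 : (n₁:ℤ) < n₂ := by exact_mod_cast h₁₂
  have c2 : (n₂:ℤ) < n₃ := by exact_mod_cast h₂₃
  have c3 : (n₃:ℤ) ≠ (n₁:ℤ) + n₂ := by exact_mod_cast hsym
  have hqne : q ≠ 0 := by
    rw [hq]
    apply mul_ne_zero
    apply mul_ne_zero
    apply mul_ne_zero
    · norm_num
    · intro h'; apply c3; linarith [h']
    · intro h'; linarith [h']
    · intro h'; linarith [h']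
  have hA : IsSquare a := ⟨(((n₁ : ℤ) + n₂ - n₃) ^ 2 - 4 * n₁ * n₂), by rw [ha]; ring⟩
  have hS1 : IsSquare (a + n₁ * q) :=
    ⟨3*(n₁:ℤ)^2 - n₂^2 - n₃^2 - 2*n₁*n₂ - 2*n₁*n₃ + 2*n₂*n₃, by rw [ha, hq]; ring⟩
  have hS2 : IsSquare (a + n₂ * q) :=
    ⟨(n₁:ℤ)^2 - 3*n₂^2 + n₃^2 + 2*n₁*n₂ - 2*n₁*n₃ + 2*n₂*n₃, by rw [ha, hq]; ring⟩
  have hS3 : IsSquare (a + n₃ * q) :=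
    ⟨(n₁:ℤ)^2 + n₂^2 - 3*n₃^2 - 2*n₁*n₂ + 2*n₁*n₃ + 2*n₂*n₃, by rw [ha, hq]; ring⟩
  refine ⟨hqne, hA, hS1, hS2, hS3, ?_⟩
  apply exists_mem_Zset _ q a hqne
  intro i hi
  simp only [Finset.mem_insert, Finset.mem_singleton] at hi
  rcases hi with rfl | rfl | rfl | rfl
  · simpa using hA
  · convert hS1 using 1; ring
  · convert hS2 using 1; ring
  · convert hS3 using 1; ring
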